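/- Let V be a real Hilbert space, a : V × V → ℝ a bounded bilinear form (not necessarily symmetric) with coercivity constant α := inf_{v≠0} a(v,v)/‖v‖_V² > 0, and K ⊆ V a nonempty closed convex set. Then for every bounded linear functional f on V there exists a unique u ∈ K such that a(u, v − u) ≥ f(v − u) for all v ∈ K. Moreover, the solution map f ↦ u is Lipschitz continuous from V' to V: if u₁ and u₂ are the solutions corresponding to f₁ and f₂, then ‖u₁ − u₂‖_V ≤ (1/α)‖f₁ − f₂‖_{V'}. -/

import Mathlib

open Real InnerProductSpace

section Aux

variable {V : Type*} [NormedAddCommGroup V] [InnerProductSpace ℝ V] [CompleteSpace V]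

/-- Lipschitz estimate for solutions of the variational inequality. -/
theorem stampacchia_lip (a : V →L[ℝ] V →L[ℝ] ℝ) (α : ℝ) (hα : 0 < α)
    (hcoer : ∀ v : V, α * ‖v‖ ^ 2 ≤ a v v) (K : Set V)
    (f₁ f₂ : V →L[ℝ] ℝ) (u₁ u₂ : V)
    (h1 : u₁ ∈ K) (hv1 : ∀ v ∈ K, f₁ (v - u₁) ≤ a u₁ (v - u₁))
    (h2 : u₂ ∈ K) (hv2 : ∀ v ∈ K, f₂ (v - u₂) ≤ a u₂ (v - u₂)) :
    ‖u₁ - u₂‖ ≤ (1 / α) * ‖f₁ - f₂‖ := by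
  have h12 := hv1 u₂ h2
  have h21 := hv2 u₁ h1
  have hc := hcoer (u₁ - u₂)
  have hb : (f₁ - f₂) (u₁ - u₂) ≤ ‖f₁ - f₂‖ * ‖u₁ - u₂‖ :=
    le_trans (le_abs_self _) ((f₁ - f₂).le_opNorm _)
  have key : α * ‖u₁ - u₂‖ ^ 2 ≤ ‖f₁ - f₂‖ * ‖u₁ - u₂‖ := by
    simp only [map_sub, ContinuousLinearMap.sub_apply] at h12 h21 hc hb ⊢
    linarith
  rcases eq_or_lt_of_le (norm_nonneg (u₁ - u₂)) with h0 | h0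
  · rw [← h0]
    positivity
  · have hh1 : α * ‖u₁ - u₂‖ ≤ ‖f₁ - f₂‖ := by nlinarith
    have hh2 := mul_le_mul_of_nonneg_left hh1 (le_of_lt (one_div_pos.mpr hα))
    calc ‖u₁ - u₂‖ = (1 / α) * (α * ‖u₁ - u₂‖) := by field_simp
      _ ≤ (1 / α) * ‖f₁ - f₂‖ := hh2

end Aux

/-- Lions–Stampacchia: existence, uniqueness, and Lipschitz continuity of the
solution map for a variational inequality of the first kind. -/
theorem stmt_0 {V : Type*} [NormedAddCommGroup V] [InnerProductSpace ℝ V] [CompleteSpace V]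
    (a : V →L[ℝ] V →L[ℝ] ℝ) (α : ℝ) (hα : 0 < α)
    (hcoer : ∀ v : V, α * ‖v‖ ^ 2 ≤ a v v)
    (K : Set V) (hKne : K.Nonempty) (hKcl : IsClosed K) (hKcv : Convex ℝ K) :
    (∀ f : V →L[ℝ] ℝ, ∃! u : V, u ∈ K ∧ ∀ v ∈ K, f (v - u) ≤ a u (v - u)) ∧
    (∀ f₁ f₂ : V →L[ℝ] ℝ, ∀ u₁ u₂ : V,
      u₁ ∈ K → (∀ v ∈ K, f₁ (v - u₁) ≤ a u₁ (v - u₁)) →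
      u₂ ∈ K → (∀ v ∈ K, f₂ (v - u₂) ≤ a u₂ (v - u₂)) →
      ‖u₁ - u₂‖ ≤ (1 / α) * ‖f₁ - f₂‖) := by
  classical
  refine ⟨?_, fun f₁ f₂ u₁ u₂ h1 hv1 h2 hv2 =>
    stampacchia_lip a α hα hcoer K f₁ f₂ u₁ u₂ h1 hv1 h2 hv2⟩
  intro f
  -- setup
  set e := InnerProductSpace.toDual ℝ V with he
  set ρ : ℝ := α / (‖a‖ ^ 2 + 1) with hρdef
  have hρ : 0 < ρ := by positivity
  set c : ℝ := max (1 - 2 * ρ * α + ρ ^ 2 * ‖a‖ ^ 2) 0 with hcdef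
  have hc0 : 0 ≤ c := le_max_right _ _
  have hc1 : c < 1 := by
    have hρa : ρ * (‖a‖ ^ 2 + 1) = α := by
      rw [hρdef]
      exact div_mul_cancel₀ _ (by positivity)
    apply max_lt _ one_pos
    nlinarith [sq_nonneg ρ, mul_pos hρ hα]
  set A : V → V := fun v => e.symm (a v) with hA
  have hAinner : ∀ v w : V, ⟪A v, w⟫_ℝ = a v w := fun v w =>
    InnerProductSpace.toDual_symm_apply
  have hAsub : ∀ x y : V, A x - A y = A (x - y) := by
    intro x y
    simp [hA, map_sub]
  have hAnorm : ∀ v : V, ‖A v‖ ≤ ‖a‖ * ‖v‖ := by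
    intro v
    rw [hA]
    calc ‖e.symm (a v)‖ = ‖a v‖ := e.symm.norm_map _
      _ ≤ ‖a‖ * ‖v‖ := a.le_opNorm v
  set F : V := e.symm f with hF
  have hFinner : ∀ w : V, ⟪F, w⟫_ℝ = f w := fun w =>
    InnerProductSpace.toDual_symm_apply
  -- key contraction estimate
  have key : ∀ v : V, ‖v - ρ • A v‖ ≤ Real.sqrt c * ‖v‖ := by
    intro v
    have hexp : ‖v - ρ • A v‖ ^ 2 = ‖v‖ ^ 2 - 2 * (ρ * (a v v)) + ρ ^ 2 * ‖A v‖ ^ 2 := by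
      rw [norm_sub_sq_real, real_inner_smul_right, norm_smul]
      rw [Real.norm_eq_abs, abs_of_pos hρ, mul_pow, real_inner_comm, hAinner]
    have hkey2 : ‖v - ρ • A v‖ ^ 2 ≤ c * ‖v‖ ^ 2 := by
      have h1 := hcoer v
      have h2 := hAnorm v
      have h3 : c ≥ 1 - 2 * ρ * α + ρ ^ 2 * ‖a‖ ^ 2 := le_max_left _ _
      have h4 : ρ ^ 2 * ‖A v‖ ^ 2 ≤ ρ ^ 2 * (‖a‖ * ‖v‖) ^ 2 :=
        mul_le_mul_of_nonneg_left (pow_le_pow_left₀ (norm_nonneg _) h2 2) (sq_nonneg ρ)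
      rw [hexp]
      nlinarith [sq_nonneg (‖v‖), mul_pos hρ hα]
    calc ‖v - ρ • A v‖ = Real.sqrt (‖v - ρ • A v‖ ^ 2) := by
          rw [Real.sqrt_sq (norm_nonneg _)]
      _ ≤ Real.sqrt (c * ‖v‖ ^ 2) := Real.sqrt_le_sqrt hkey2
      _ = Real.sqrt c * ‖v‖ := by
          rw [Real.sqrt_mul hc0, Real.sqrt_sq (norm_nonneg _)]
  -- projection onto K
  have proj_ex : ∀ x : V, ∃ p, p ∈ K ∧ ∀ w ∈ K, ⟪x - p, w - p⟫_ℝ ≤ 0 := by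
    intro x
    obtain ⟨p, hpK, hmin⟩ :=
      exists_norm_eq_iInf_of_complete_convex hKne hKcl.isComplete hKcv x
    exact ⟨p, hpK, (norm_eq_iInf_iff_real_inner_le_zero hKcv hpK).1 hmin⟩
  choose P hPK hPle using proj_ex
  have Pnonexp : ∀ x y : V, ‖P x - P y‖ ≤ ‖x - y‖ := by
    intro x y
    have h1 := hPle x (P y) (hPK y)
    have h2 := hPle y (P x) (hPK x)
    have hin : ‖P x - P y‖ ^ 2 ≤ ⟪x - y, P x - P y⟫_ℝ := by
      have e1 : ⟪x - P x, P y - P x⟫_ℝ + ⟪y - P y, P x - P y⟫_ℝ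
          = ‖P x - P y‖ ^ 2 - ⟪x - y, P x - P y⟫_ℝ := by
        rw [← real_inner_self_eq_norm_sq]
        simp only [inner_sub_left, inner_sub_right]
        ring
      linarith
    have hin2 : ⟪x - y, P x - P y⟫_ℝ ≤ ‖x - y‖ * ‖P x - P y‖ := real_inner_le_norm _ _
    by_cases hn : ‖P x - P y‖ = 0
    · rw [hn]; exact norm_nonneg _
    · have hn' : 0 < ‖P x - P y‖ := lt_of_le_of_ne (norm_nonneg _) (Ne.symm hn)
      nlinarith
  -- the contraction on K
  haveI : Nonempty K := hKne.to_subtype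
  haveI : CompleteSpace K := hKcl.completeSpace_coe
  set T : K → K := fun x => ⟨P ((x : V) - ρ • (A x - F)), hPK _⟩ with hT
  set k : NNReal := ⟨Real.sqrt c, Real.sqrt_nonneg c⟩ with hk
  have hk1 : (k : ℝ) < 1 := by
    calc (k : ℝ) = Real.sqrt c := rfl
      _ < 1 := by
        rw [show (1 : ℝ) = Real.sqrt 1 by rw [Real.sqrt_one]]
        exact Real.sqrt_lt_sqrt hc0 hc1
  have hcontr : ContractingWith k T := by
    refine ⟨by exact_mod_cast hk1, LipschitzWith.of_dist_le_mul fun x y => ?_⟩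
    rw [Subtype.dist_eq, dist_eq_norm, Subtype.dist_eq, dist_eq_norm]
    calc ‖(T x : V) - (T y : V)‖
        ≤ ‖((x : V) - ρ • (A x - F)) - ((y : V) - ρ • (A y - F))‖ := Pnonexp _ _
      _ = ‖((x : V) - (y : V)) - ρ • (A (x : V) - A (y : V))‖ := by
          congr 1
          rw [smul_sub, smul_sub, smul_sub]
          abel
      _ = ‖((x : V) - (y : V)) - ρ • A ((x : V) - (y : V))‖ := by
          rw [hAsub]
      _ ≤ Real.sqrt c * ‖(x : V) - (y : V)‖ := key _
      _ = (k : ℝ) * ‖(x : V) - (y : V)‖ := rfl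
  -- fixed point
  set u : K := ContractingWith.fixedPoint T hcontr with hu
  have hfix : T u = u := hcontr.fixedPoint_isFixedPt
  have hfixv : P ((u : V) - ρ • (A u - F)) = (u : V) := congrArg Subtype.val hfix
  have hsol : ∀ v ∈ K, f (v - (u : V)) ≤ a (u : V) (v - (u : V)) := by
    intro v hv
    have h := hPle ((u : V) - ρ • (A u - F)) v hv
    rw [hfixv] at h
    have h2 : ⟪((u : V) - ρ • (A u - F)) - (u : V), v - (u : V)⟫_ℝ
        = ρ * (f (v - (u : V)) - a (u : V) (v - (u : V))) := by
      have : ((u : V) - ρ • (A u - F)) - (u : V) = ρ • (F - A u) := by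
        rw [smul_sub, smul_sub]
        abel
      rw [this, real_inner_smul_left, inner_sub_left, hFinner, hAinner]
    rw [h2] at h
    nlinarith
  refine ⟨(u : V), ⟨u.2, hsol⟩, fun y hy => ?_⟩
  have := stampacchia_lip a α hα hcoer K f f y (u : V) hy.1 hy.2 u.2 hsol
  have hff : ‖f - f‖ = 0 := by simp
  rw [hff, mul_zero] at this
  have h0 : y - (u : V) = 0 := by
    rw [← norm_le_zero_iff]
    exact this
  exact sub_eq_zero.mp h0
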